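/- (SLLN for the local clustering coefficient, conditional version) Fix x ∈ R with E_D(x) := E[I_B(f_c(x, X_2))] > 0. Define T_n(x) = Σ_{2 ≤ j < k ≤ n} I_B(f_c(x,X_j)) I_B(f_c(X_j,X_k)) I_B(f_c(X_k,x)) and V_n(x) = Σ_{2 ≤ j < k ≤ n} I_B(f_c(x,X_j)) I_B(f_c(x,X_k)). Then almost surely T_n(x)/V_n(x) (defined for large n when V_n(x) ≥ 1) converges to E_T(x)/E_D(x)^2, where E_T(x) = E[I_B(f_c(x,X_2)) I_B(f_c(X_2,X_3)) I_B(f_c(X_3,x))]. -/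

import Mathlib

open MeasureTheory ProbabilityTheory Finset Filter
open scoped Classical ENNReal


/-- the index set of pairs -/
noncomputable def pairsU (n : ℕ) : Finset (ℕ × ℕ) :=
  (Finset.range n ×ˢ Finset.range n).filter fun p => p.1 < p.2

lemma mem_pairsU {n : ℕ} {p : ℕ × ℕ} :
    p ∈ pairsU n ↔ p.1 < p.2 ∧ p.2 < n := by
  simp only [pairsU, Finset.mem_filter, Finset.mem_product, Finset.mem_range]
  constructor
  · rintro ⟨⟨h1, h2⟩, h3⟩; exact ⟨h3, h2⟩
  · rintro ⟨h1, h2⟩; exact ⟨⟨h1.trans h2, h2⟩, h1⟩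

lemma pairsU_mono {m n : ℕ} (h : m ≤ n) : pairsU m ⊆ pairsU n := by
  intro p hp
  rw [mem_pairsU] at hp ⊢
  exact ⟨hp.1, hp.2.trans_le h⟩

lemma sum_pairsU (n : ℕ) (f : ℕ → ℕ → ℝ) :
    ∑ j ∈ Finset.range n, ∑ k ∈ Finset.Ioo j n, f j k
      = ∑ p ∈ pairsU n, f p.1 p.2 := by
  rw [pairsU, Finset.sum_filter, Finset.sum_product]
  refine Finset.sum_congr rfl fun j hj => ?_
  rw [← Finset.sum_filter]
  refine (Finset.sum_congr ?_ fun _ _ => rfl)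
  ext k
  simp [Finset.mem_Ioo, and_comm]

lemma card_pairsU (n : ℕ) : ((pairsU n).card : ℝ) * 2 = n * (n - 1) := by
  have h1 : ((pairsU n).card : ℝ) = ∑ j ∈ Finset.range n, ∑ k ∈ Finset.Ioo j n, (1:ℝ) := by
    rw [sum_pairsU]; simp
  rcases Nat.eq_zero_or_pos n with hn | hn
  · subst hn; simp [h1, pairsU]
  have h2 : ∀ j ∈ Finset.range n, ∑ k ∈ Finset.Ioo j n, (1:ℝ) = ((n - 1 - j : ℕ) : ℝ) := by
    intro j hj
    rw [Finset.sum_const, Nat.card_Ioo]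
    simp [Nat.sub_sub, Nat.add_comm]
  rw [h1, Finset.sum_congr rfl h2, ← Nat.cast_sum,
    Finset.sum_range_reflect (fun i => i) n]
  have h3 := Finset.sum_range_id_mul_two n
  have h4 : ((∑ i ∈ Finset.range n, i : ℕ) : ℝ) * 2 = ((n * (n-1) : ℕ) : ℝ) := by
    rw [← h3]; push_cast; ring
  rw [h4, Nat.cast_mul, Nat.cast_sub hn]
  push_cast; ring

lemma card_pairsU_le (n : ℕ) : (pairsU n).card ≤ n * n := by
  calc (pairsU n).card ≤ (Finset.range n ×ˢ Finset.range n).card :=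
        Finset.card_le_card (Finset.filter_subset _ _)
    _ = n * n := by simp


def shares (p q : ℕ × ℕ) : Prop :=
  p.1 = q.1 ∨ p.1 = q.2 ∨ p.2 = q.1 ∨ p.2 = q.2

instance : ∀ p q, Decidable (shares p q) := fun p q => by unfold shares; infer_instance

lemma card_shares_le (n : ℕ) (p : ℕ × ℕ) :
    ((pairsU n).filter (shares p)).card ≤ 4 * n := by
  have hsub : (pairsU n).filter (shares p) ⊆
      ({p.1, p.2} ×ˢ Finset.range n) ∪ (Finset.range n ×ˢ {p.1, p.2}) := by
    intro q hq
    rw [Finset.mem_filter, mem_pairsU] at hq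
    obtain ⟨⟨hq1, hq2⟩, hs⟩ := hq
    have hq1' : q.1 ∈ Finset.range n := Finset.mem_range.2 (hq1.trans hq2)
    have hq2' : q.2 ∈ Finset.range n := Finset.mem_range.2 hq2
    rcases hs with h | h | h | h
    · exact Finset.mem_union_left _ (Finset.mem_product.2 ⟨by simp [h.symm], hq2'⟩)
    · exact Finset.mem_union_right _ (Finset.mem_product.2 ⟨hq1', by simp [h.symm]⟩)
    · exact Finset.mem_union_left _ (Finset.mem_product.2 ⟨by simp [h.symm], hq2'⟩)
    · exact Finset.mem_union_right _ (Finset.mem_product.2 ⟨hq1', by simp [h.symm]⟩)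
  calc ((pairsU n).filter (shares p)).card
      ≤ (({p.1, p.2} ×ˢ Finset.range n) ∪ (Finset.range n ×ˢ {p.1, p.2})).card :=
        Finset.card_le_card hsub
    _ ≤ ({p.1, p.2} ×ˢ Finset.range n).card + (Finset.range n ×ˢ {p.1, p.2}).card :=
        Finset.card_union_le _ _
    _ ≤ 2 * n + n * 2 := by
        rw [Finset.card_product, Finset.card_product, Finset.card_range]
        have : ({p.1, p.2} : Finset ℕ).card ≤ 2 := Finset.card_insert_le _ _ |>.trans (by simp)
        exact Nat.add_le_add (Nat.mul_le_mul_right n this) (Nat.mul_le_mul_left n this)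
    _ = 4 * n := by ring


lemma ratio_tendsto_one :
    Tendsto (fun m : ℕ => (((m:ℝ)+1)/m)^4) atTop (nhds 1) := by
  have h1 : Tendsto (fun m : ℕ => ((m:ℝ)+1)/m) atTop (nhds 1) := by
    have h2 : Tendsto (fun m : ℕ => 1 + 1/(m:ℝ)) atTop (nhds 1) := by
      have := tendsto_one_div_atTop_nhds_zero_nat (𝕜 := ℝ)
      simpa using tendsto_const_nhds.add this
    refine h2.congr' ?_
    filter_upwards [eventually_ge_atTop 1] with m hm
    have hm' : (m:ℝ) ≠ 0 := by positivity
    field_simp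
  have := h1.pow 4
  simpa using this

lemma ratio_tendsto_one' :
    Tendsto (fun m : ℕ => ((m:ℝ)/((m:ℝ)+1))^4) atTop (nhds 1) := by
  have h1 : Tendsto (fun m : ℕ => (((m:ℝ)+1)/m)^4) atTop (nhds 1) := ratio_tendsto_one
  have h2 := h1.inv₀ (by norm_num)
  rw [show ((1:ℝ))⁻¹ = 1 by norm_num] at h2
  refine h2.congr fun m => ?_
  rw [← inv_pow, inv_div]

lemma sqrt_tendsto : Tendsto Nat.sqrt atTop atTop := by
  refine tendsto_atTop_atTop.2 fun b => ⟨b*b, fun n hn => ?_⟩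
  exact Nat.le_sqrt.2 hn

lemma sandwich_lemma (f : ℕ → ℝ) (hmono : Monotone f) (hnonneg : ∀ n, 0 ≤ f n) (L : ℝ)
    (hsub : Tendsto (fun m : ℕ => f (m^2) / (m:ℝ)^4) atTop (nhds L)) :
    Tendsto (fun n : ℕ => f n / (n:ℝ)^2) atTop (nhds L) := by
  -- shifted limit
  have hshift : Tendsto (fun m : ℕ => f ((m+1)^2) / ((m:ℝ)+1)^4) atTop (nhds L) := by
    have := hsub.comp (tendsto_add_atTop_nat 1)
    refine this.congr fun m => ?_
    simp only [Function.comp]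
    push_cast
    ring_nf
  have hu : Tendsto (fun m : ℕ => f ((m+1)^2) / (m:ℝ)^4) atTop (nhds L) := by
    have hmul := hshift.mul ratio_tendsto_one
    rw [mul_one] at hmul
    refine hmul.congr' ?_
    filter_upwards [eventually_ge_atTop 1] with m hm
    have hm' : (m:ℝ) ≠ 0 := by positivity
    have hm1 : (m:ℝ) + 1 ≠ 0 := by positivity
    field_simp
  have hl : Tendsto (fun m : ℕ => f (m^2) / ((m:ℝ)+1)^4) atTop (nhds L) := by
    have hmul := hsub.mul ratio_tendsto_one'
    rw [mul_one] at hmul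
    refine hmul.congr' ?_
    filter_upwards [eventually_ge_atTop 1] with m hm
    have hm' : (m:ℝ) ≠ 0 := by positivity
    have hm1 : (m:ℝ) + 1 ≠ 0 := by positivity
    field_simp
  have hlower := hl.comp sqrt_tendsto
  have hupper := hu.comp sqrt_tendsto
  refine tendsto_of_tendsto_of_tendsto_of_le_of_le' hlower hupper ?_ ?_
  · filter_upwards [eventually_ge_atTop 1] with n hn
    simp only [Function.comp]
    set m := Nat.sqrt n with hm
    have hm2 : m^2 ≤ n := Nat.sqrt_le' n
    have hn2 : n < (m+1)^2 := Nat.lt_succ_sqrt' n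
    have hfn : f (m^2) ≤ f n := hmono hm2
    have hnum : ((n:ℝ))^2 ≤ ((m:ℝ)+1)^4 := by
      have : ((n:ℝ)) ≤ ((m+1:ℕ):ℝ)^2 := by
        exact_mod_cast (Nat.le_of_lt hn2)
      calc ((n:ℝ))^2 ≤ (((m+1:ℕ):ℝ)^2)^2 := by
            apply pow_le_pow_left₀ (by positivity) this
        _ = ((m:ℝ)+1)^4 := by push_cast; ring
    have hnpos : (0:ℝ) < (n:ℝ)^2 := by
      have : (0:ℝ) < (n:ℝ) := by exact_mod_cast hn
      positivity
    exact div_le_div₀ (hnonneg n) hfn hnpos hnum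
  · filter_upwards [eventually_ge_atTop 1] with n hn
    simp only [Function.comp]
    set m := Nat.sqrt n with hm
    have hmpos : 1 ≤ m := by
      rw [hm]; exact Nat.le_sqrt.2 (by simpa using hn)
    have hm2 : m^2 ≤ n := Nat.sqrt_le' n
    have hn2 : n < (m+1)^2 := Nat.lt_succ_sqrt' n
    have hfn : f n ≤ f ((m+1)^2) := hmono (Nat.le_of_lt hn2)
    have hden : ((m:ℝ))^4 ≤ ((n:ℝ))^2 := by
      have : ((m:ℝ))^2 ≤ (n:ℝ) := by
        exact_mod_cast hm2
      calc ((m:ℝ))^4 = (((m:ℝ))^2)^2 := by ring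
        _ ≤ ((n:ℝ))^2 := by apply pow_le_pow_left₀ (by positivity) this
    have hmpos' : (0:ℝ) < (m:ℝ)^4 := by
      have : (0:ℝ) < (m:ℝ) := by exact_mod_cast hmpos
      positivity
    exact div_le_div₀ (hnonneg _) hfn hmpos' hden


lemma sq_tendsto_atTop : Tendsto (fun m : ℕ => m^2) atTop atTop :=
  tendsto_atTop_atTop.2 fun b => ⟨b, fun n hn => hn.trans (Nat.le_self_pow two_ne_zero n)⟩

lemma card_ratio :
    Tendsto (fun n : ℕ => ((pairsU n).card : ℝ) / (n:ℝ)^2) atTop (nhds (1/2)) := by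
  have hlim : Tendsto (fun n : ℕ => (1 - 1/(n:ℝ))/2) atTop (nhds (1/2)) := by
    have h1 : Tendsto (fun n : ℕ => (1:ℝ) - 1/(n:ℝ)) atTop (nhds (1 - 0)) :=
      Tendsto.sub tendsto_const_nhds tendsto_one_div_atTop_nhds_zero_nat
    have h2 := h1.div_const 2
    norm_num at h2
    exact h2.congr fun n => by rw [one_div]
  refine hlim.congr' ?_
  filter_upwards [eventually_ge_atTop 1] with n hn
  have hn' : (n:ℝ) ≠ 0 := by positivity
  have hc := card_pairsU n
  have : ((pairsU n).card : ℝ) = n * (n-1) / 2 := by linarith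
  rw [this]
  field_simp


section Core

variable {Ω : Type*} [MeasurableSpace Ω] {P : Measure Ω} [IsProbabilityMeasure P]
  {X : ℕ → Ω → ℝ} {h : ℝ → ℝ → ℝ}

lemma map_pair_eq (hXmeas : ∀ i, Measurable (X i))
    (hindep : iIndepFun X P)
    (hident : ∀ i j, IdentDistrib (X i) (X j) P P)
    {j k : ℕ} (hjk : j ≠ k) :
    P.map (fun ω => (X j ω, X k ω)) = P.map (fun ω => (X 0 ω, X 1 ω)) := by
  have h1 : P.map (fun ω => (X j ω, X k ω)) = (P.map (X j)).prod (P.map (X k)) :=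
    (indepFun_iff_map_prod_eq_prod_map_map (hXmeas j).aemeasurable
      (hXmeas k).aemeasurable).1 (hindep.indepFun hjk)
  have h2 : P.map (fun ω => (X 0 ω, X 1 ω)) = (P.map (X 0)).prod (P.map (X 1)) :=
    (indepFun_iff_map_prod_eq_prod_map_map (hXmeas 0).aemeasurable
      (hXmeas 1).aemeasurable).1 (hindep.indepFun (by norm_num))
  rw [h1, h2, (hident j 0).map_eq, (hident k 1).map_eq]

lemma exp_pair_eq (hXmeas : ∀ i, Measurable (X i))
    (hindep : iIndepFun X P)
    (hident : ∀ i j, IdentDistrib (X i) (X j) P P)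
    (hmeas : Measurable fun p : ℝ × ℝ => h p.1 p.2)
    {j k : ℕ} (hjk : j ≠ k) :
    ∫ ω, h (X j ω) (X k ω) ∂P = ∫ ω, h (X 0 ω) (X 1 ω) ∂P := by
  have e1 : ∫ ω, h (X j ω) (X k ω) ∂P
      = ∫ p, h p.1 p.2 ∂(P.map (fun ω => (X j ω, X k ω))) := by
    rw [integral_map ((hXmeas j).prodMk (hXmeas k)).aemeasurable
      hmeas.aestronglyMeasurable]
  have e2 : ∫ ω, h (X 0 ω) (X 1 ω) ∂P
      = ∫ p, h p.1 p.2 ∂(P.map (fun ω => (X 0 ω, X 1 ω))) := by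
    rw [integral_map ((hXmeas 0).prodMk (hXmeas 1)).aemeasurable
      hmeas.aestronglyMeasurable]
  rw [e1, e2, map_pair_eq hXmeas hindep hident hjk]


variable (hXmeas : ∀ i, Measurable (X i))
  (hindep : iIndepFun X P)
  (hident : ∀ i j, IdentDistrib (X i) (X j) P P)
  (hmeas : Measurable fun p : ℝ × ℝ => h p.1 p.2)
  (h0 : ∀ u v, 0 ≤ h u v) (h1 : ∀ u v, h u v ≤ 1)

local notation "μU" => ∫ ω, h (X 0 ω) (X 1 ω) ∂P

include h0 h1 in
lemma muU_mem : 0 ≤ μU ∧ μU ≤ 1 := by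
  constructor
  · exact integral_nonneg fun ω => h0 _ _
  · have step : μU ≤ ∫ _, (1:ℝ) ∂P :=
      integral_mono_of_nonneg (Filter.Eventually.of_forall fun ω => h0 _ _)
        (integrable_const 1) (Filter.Eventually.of_forall fun ω => h1 _ _)
    simpa using step

include hXmeas hmeas in
lemma Ymeas (p : ℕ × ℕ) :
    Measurable fun ω => h (X p.1 ω) (X p.2 ω) - μU :=
  (hmeas.comp ((hXmeas p.1).prodMk (hXmeas p.2))).sub measurable_const

include h0 h1 in
lemma Ybdd (p : ℕ × ℕ) (ω : Ω) : |h (X p.1 ω) (X p.2 ω) - μU| ≤ 1 := by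
  obtain ⟨hm0, hm1⟩ := muU_mem (P := P) (X := X) h0 h1
  have := h0 (X p.1 ω) (X p.2 ω); have := h1 (X p.1 ω) (X p.2 ω)
  rw [abs_le]; constructor <;> linarith

include hXmeas hmeas h0 h1 in
lemma Yint_mul (p q : ℕ × ℕ) :
    Integrable (fun ω => (h (X p.1 ω) (X p.2 ω) - μU) * (h (X q.1 ω) (X q.2 ω) - μU)) P := by
  refine (integrable_const (1:ℝ)).mono'
    (((Ymeas hXmeas hmeas p).mul (Ymeas hXmeas hmeas q)).aestronglyMeasurable) ?_
  refine Filter.Eventually.of_forall fun ω => ?_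
  rw [norm_mul]
  calc ‖h (X p.1 ω) (X p.2 ω) - μU‖ * ‖h (X q.1 ω) (X q.2 ω) - μU‖
      ≤ 1 * 1 := mul_le_mul (Ybdd h0 h1 p ω) (Ybdd h0 h1 q ω) (norm_nonneg _) zero_le_one
    _ = 1 := by ring

include hXmeas hmeas h0 h1 in
lemma Yint (p : ℕ × ℕ) :
    Integrable (fun ω => h (X p.1 ω) (X p.2 ω) - μU) P := by
  refine (integrable_const (1:ℝ)).mono'
    ((Ymeas hXmeas hmeas p).aestronglyMeasurable) ?_
  exact Filter.Eventually.of_forall fun ω => Ybdd h0 h1 p ω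

include hXmeas hindep hident hmeas h0 h1 in
lemma Yexp_zero {p : ℕ × ℕ} (hp : p.1 ≠ p.2) :
    ∫ ω, (h (X p.1 ω) (X p.2 ω) - μU) ∂P = 0 := by
  have hint : Integrable (fun ω => h (X p.1 ω) (X p.2 ω)) P := by
    refine (integrable_const (1:ℝ)).mono'
      ((hmeas.comp ((hXmeas p.1).prodMk (hXmeas p.2))).aestronglyMeasurable) ?_
    refine Filter.Eventually.of_forall fun ω => ?_
    rw [Real.norm_eq_abs, abs_of_nonneg (h0 _ _)]
    exact h1 _ _
  rw [integral_sub hint (integrable_const _), integral_const]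
  simp [exp_pair_eq hXmeas hindep hident hmeas hp]

include hXmeas hindep hident hmeas h0 h1 in
lemma Ycov_zero {p q : ℕ × ℕ} (hp : p.1 ≠ p.2)
    (d11 : p.1 ≠ q.1) (d12 : p.1 ≠ q.2) (d21 : p.2 ≠ q.1) (d22 : p.2 ≠ q.2) :
    ∫ ω, (h (X p.1 ω) (X p.2 ω) - μU) * (h (X q.1 ω) (X q.2 ω) - μU) ∂P = 0 := by
  have hpair : IndepFun (fun ω => (X p.1 ω, X p.2 ω)) (fun ω => (X q.1 ω, X q.2 ω)) P :=
    hindep.indepFun_prodMk_prodMk hXmeas p.1 p.2 q.1 q.2 d11 d12 d21 d22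
  have hYindep : IndepFun (fun ω => h (X p.1 ω) (X p.2 ω) - μU)
      (fun ω => h (X q.1 ω) (X q.2 ω) - μU) P :=
    hpair.comp (φ := fun r : ℝ × ℝ => h r.1 r.2 - μU) (ψ := fun r : ℝ × ℝ => h r.1 r.2 - μU)
      (hmeas.sub measurable_const) (hmeas.sub measurable_const)
  have hm := hYindep.integral_mul_eq_mul_integral (Yint hXmeas hmeas h0 h1 p).aestronglyMeasurable
    (Yint hXmeas hmeas h0 h1 q).aestronglyMeasurable
  rw [show (fun ω => (h (X p.1 ω) (X p.2 ω) - μU) * (h (X q.1 ω) (X q.2 ω) - μU))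
      = ((fun ω => h (X p.1 ω) (X p.2 ω) - μU) * fun ω => h (X q.1 ω) (X q.2 ω) - μU)
    from rfl, hm, Yexp_zero hXmeas hindep hident hmeas h0 h1 hp, zero_mul]

include hXmeas hmeas h0 h1 in
lemma Ycov_le_one (p q : ℕ × ℕ) :
    ∫ ω, (h (X p.1 ω) (X p.2 ω) - μU) * (h (X q.1 ω) (X q.2 ω) - μU) ∂P ≤ 1 := by
  have := norm_integral_le_of_norm_le_const (μ := P)
    (f := fun ω => (h (X p.1 ω) (X p.2 ω) - μU) * (h (X q.1 ω) (X q.2 ω) - μU)) (C := 1) ?_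
  · rw [Real.norm_eq_abs, abs_le] at this
    simpa using this.2
  · refine Filter.Eventually.of_forall fun ω => ?_
    rw [norm_mul]
    calc ‖h (X p.1 ω) (X p.2 ω) - μU‖ * ‖h (X q.1 ω) (X q.2 ω) - μU‖
        ≤ 1 * 1 := mul_le_mul (Ybdd h0 h1 p ω) (Ybdd h0 h1 q ω) (norm_nonneg _) zero_le_one
      _ = 1 := by ring


include hXmeas hindep hident hmeas h0 h1 in
lemma var_bound (n : ℕ) :
    ∫ ω, (∑ p ∈ pairsU n, (h (X p.1 ω) (X p.2 ω) - μU))^2 ∂P ≤ 4 * n^3 := by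
  have expand : ∀ ω, (∑ p ∈ pairsU n, (h (X p.1 ω) (X p.2 ω) - μU))^2
      = ∑ p ∈ pairsU n, ∑ q ∈ pairsU n,
          (h (X p.1 ω) (X p.2 ω) - μU) * (h (X q.1 ω) (X q.2 ω) - μU) := by
    intro ω
    rw [sq, Finset.sum_mul_sum]
  have swap : ∫ ω, (∑ p ∈ pairsU n, (h (X p.1 ω) (X p.2 ω) - μU))^2 ∂P
      = ∑ p ∈ pairsU n, ∑ q ∈ pairsU n,
          ∫ ω, (h (X p.1 ω) (X p.2 ω) - μU) * (h (X q.1 ω) (X q.2 ω) - μU) ∂P := by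
    simp_rw [expand]
    rw [integral_finset_sum _ fun p _ =>
      integrable_finset_sum _ fun q _ => Yint_mul hXmeas hmeas h0 h1 p q]
    exact Finset.sum_congr rfl fun p _ =>
      integral_finset_sum _ fun q _ => Yint_mul hXmeas hmeas h0 h1 p q
  rw [swap]
  have step1 : ∀ p ∈ pairsU n, ∑ q ∈ pairsU n,
      (∫ ω, (h (X p.1 ω) (X p.2 ω) - μU) * (h (X q.1 ω) (X q.2 ω) - μU) ∂P)
        ≤ 4 * n := by
    intro p hp
    have hbound : ∀ q ∈ pairsU n,
        (∫ ω, (h (X p.1 ω) (X p.2 ω) - μU) * (h (X q.1 ω) (X q.2 ω) - μU) ∂P)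
          ≤ if shares p q then (1:ℝ) else 0 := by
      intro q hq
      by_cases hs : shares p q
      · simpa [hs] using Ycov_le_one hXmeas hmeas h0 h1 p q
      · rw [if_neg hs]
        unfold shares at hs
        push_neg at hs
        obtain ⟨d11, d12, d21, d22⟩ := hs
        exact le_of_eq (Ycov_zero hXmeas hindep hident hmeas h0 h1
          (Nat.ne_of_lt (mem_pairsU.1 hp).1) d11 d12 d21 d22)
    calc ∑ q ∈ pairsU n, (∫ ω, (h (X p.1 ω) (X p.2 ω) - μU) * (h (X q.1 ω) (X q.2 ω) - μU) ∂P)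
        ≤ ∑ q ∈ pairsU n, (if shares p q then (1:ℝ) else 0) := Finset.sum_le_sum hbound
      _ = ((pairsU n).filter (shares p)).card := by rw [Finset.sum_boole]
      _ ≤ 4 * n := by
          have := card_shares_le n p
          calc (((pairsU n).filter (shares p)).card : ℝ) ≤ ((4 * n : ℕ) : ℝ) :=
                Nat.cast_le.2 this
            _ = 4 * n := by push_cast; ring
  calc ∑ p ∈ pairsU n, ∑ q ∈ pairsU n,
        (∫ ω, (h (X p.1 ω) (X p.2 ω) - μU) * (h (X q.1 ω) (X q.2 ω) - μU) ∂P)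
      ≤ ∑ _p ∈ pairsU n, (4 * n : ℝ) := Finset.sum_le_sum step1
    _ = ((pairsU n).card : ℝ) * (4 * n) := by rw [Finset.sum_const, nsmul_eq_mul]
    _ ≤ (n * n : ℝ) * (4 * n) := by
        have : ((pairsU n).card : ℝ) ≤ ((n * n : ℕ) : ℝ) := Nat.cast_le.2 (card_pairsU_le n)
        push_cast at this
        have h4n : (0:ℝ) ≤ 4 * n := by positivity
        exact mul_le_mul_of_nonneg_right this h4n
    _ = 4 * n^3 := by ring


include hXmeas hindep hident hmeas h0 h1 in
lemma Zsub_tendsto :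
    ∀ᵐ ω ∂P, Tendsto (fun m : ℕ =>
      (∑ p ∈ pairsU (m^2), (h (X p.1 ω) (X p.2 ω) - μU)) / (m:ℝ)^4)
      atTop (nhds 0) := by
  set Zr : ℕ → Ω → ℝ := fun m ω =>
    (∑ p ∈ pairsU (m^2), (h (X p.1 ω) (X p.2 ω) - μU)) / (m:ℝ)^4 with hZr
  have hZmeas : ∀ m, Measurable (Zr m) := fun m =>
    (Finset.measurable_sum _ fun p _ => Ymeas hXmeas hmeas p).div_const _
  have habs : ∀ m ω, |∑ p ∈ pairsU (m^2), (h (X p.1 ω) (X p.2 ω) - μU)|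
      ≤ ((pairsU (m^2)).card : ℝ) := by
    intro m ω
    calc |∑ p ∈ pairsU (m^2), (h (X p.1 ω) (X p.2 ω) - μU)|
        ≤ ∑ p ∈ pairsU (m^2), |h (X p.1 ω) (X p.2 ω) - μU| :=
          Finset.abs_sum_le_sum_abs _ _
      _ ≤ ∑ _p ∈ pairsU (m^2), (1:ℝ) :=
          Finset.sum_le_sum fun p _ => Ybdd h0 h1 p ω
      _ = ((pairsU (m^2)).card : ℝ) := by rw [Finset.sum_const, nsmul_eq_mul, mul_one]
  have hint : ∀ m : ℕ, Integrable (fun ω =>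
      (∑ p ∈ pairsU (m^2), (h (X p.1 ω) (X p.2 ω) - μU))^2) P := by
    intro m
    refine (integrable_const (((pairsU (m^2)).card : ℝ)^2)).mono'
      ((Finset.measurable_sum _ fun p _ => Ymeas hXmeas hmeas p).pow_const 2).aestronglyMeasurable ?_
    refine Filter.Eventually.of_forall fun ω => ?_
    rw [Real.norm_eq_abs, abs_pow]
    exact pow_le_pow_left₀ (abs_nonneg _) (habs m ω) 2
  have key : ∀ m : ℕ, ∫⁻ ω, ENNReal.ofReal ((Zr m ω)^2) ∂P ≤ ENNReal.ofReal (4/(m:ℝ)^2) := by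
    intro m
    rcases Nat.eq_zero_or_pos m with hm | hm
    · subst hm
      simp [hZr, pairsU]
    have hm4 : ((m:ℝ))^4 ≠ 0 := by positivity
    have hZsq : ∀ ω, (Zr m ω)^2
        = (∑ p ∈ pairsU (m^2), (h (X p.1 ω) (X p.2 ω) - μU))^2 / ((m:ℝ)^4)^2 := by
      intro ω; rw [hZr, div_pow]
    have hintZ : Integrable (fun ω => (Zr m ω)^2) P := by
      simp_rw [hZsq]
      exact (hint m).div_const _
    rw [← ofReal_integral_eq_lintegral_ofReal hintZ
      (Filter.Eventually.of_forall fun ω => sq_nonneg _)]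
    apply ENNReal.ofReal_le_ofReal
    have e1 : ∫ ω, (Zr m ω)^2 ∂P
        = (∫ ω, (∑ p ∈ pairsU (m^2), (h (X p.1 ω) (X p.2 ω) - μU))^2 ∂P) / ((m:ℝ)^4)^2 := by
      simp_rw [hZsq]
      rw [integral_div]
    rw [e1]
    have e2 := var_bound hXmeas hindep hident hmeas h0 h1 (m^2)
    have hpos : (0:ℝ) < ((m:ℝ)^4)^2 := by positivity
    rw [div_le_iff₀ hpos]
    calc ∫ ω, (∑ p ∈ pairsU (m^2), (h (X p.1 ω) (X p.2 ω) - μU))^2 ∂P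
        ≤ 4 * ((m^2 : ℕ) : ℝ)^3 := e2
      _ = 4/(m:ℝ)^2 * ((m:ℝ)^4)^2 := by push_cast; field_simp
  have hsummable : Summable (fun m : ℕ => 4/(m:ℝ)^2) := by
    have := Real.summable_one_div_nat_pow.2 (show 1 < 2 by norm_num)
    simpa [div_eq_mul_inv] using this.mul_left 4
  have htsum_lt : ∑' m : ℕ, ∫⁻ ω, ENNReal.ofReal ((Zr m ω)^2) ∂P < ⊤ := by
    calc ∑' m : ℕ, ∫⁻ ω, ENNReal.ofReal ((Zr m ω)^2) ∂P
        ≤ ∑' m : ℕ, ENNReal.ofReal (4/(m:ℝ)^2) := ENNReal.tsum_le_tsum key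
      _ = ENNReal.ofReal (∑' m : ℕ, 4/(m:ℝ)^2) :=
          (ENNReal.ofReal_tsum_of_nonneg (fun m => by positivity) hsummable).symm
      _ < ⊤ := ENNReal.ofReal_lt_top
  have hlint : ∫⁻ ω, (∑' m : ℕ, ENNReal.ofReal ((Zr m ω)^2)) ∂P < ⊤ := by
    rw [lintegral_tsum fun m =>
      ((hZmeas m).pow_const 2).ennreal_ofReal.aemeasurable]
    exact htsum_lt
  have hae : ∀ᵐ ω ∂P, (∑' m : ℕ, ENNReal.ofReal ((Zr m ω)^2)) < ⊤ :=
    ae_lt_top (by measurability) hlint.ne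
  filter_upwards [hae] with ω hω
  have h2 : Tendsto (fun m => ENNReal.ofReal ((Zr m ω)^2)) atTop (nhds 0) :=
    ENNReal.tendsto_atTop_zero_of_tsum_ne_top hω.ne
  have h3 : Tendsto (fun m => (Zr m ω)^2) atTop (nhds 0) := by
    have h4 := (ENNReal.tendsto_toReal (by simp : (0:ℝ≥0∞) ≠ ⊤)).comp h2
    exact h4.congr fun m => by
      simp [Function.comp, ENNReal.toReal_ofReal (sq_nonneg _)]
  rw [tendsto_zero_iff_abs_tendsto_zero]
  have h5 := h3.sqrt
  rw [Real.sqrt_zero] at h5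
  exact h5.congr fun m => Real.sqrt_sq_eq_abs (Zr m ω)


include hXmeas hindep hident hmeas h0 h1 in
lemma pair_slln :
    ∀ᵐ ω ∂P, Tendsto (fun n : ℕ =>
      (∑ p ∈ pairsU n, h (X p.1 ω) (X p.2 ω)) / (n:ℝ)^2) atTop (nhds (μU / 2)) := by
  filter_upwards [Zsub_tendsto hXmeas hindep hident hmeas h0 h1] with ω hω
  refine sandwich_lemma _ ?_ ?_ _ ?_
  · intro a b hab
    exact Finset.sum_le_sum_of_subset_of_nonneg (pairsU_mono hab) fun p _ _ => h0 _ _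
  · intro n
    exact Finset.sum_nonneg fun p _ => h0 _ _
  · -- subsequence limit
    have hcard : Tendsto (fun m : ℕ => ((pairsU (m^2)).card : ℝ) / (m:ℝ)^4)
        atTop (nhds (1/2)) := by
      have := card_ratio.comp sq_tendsto_atTop
      refine this.congr fun m => ?_
      simp only [Function.comp]
      push_cast
      ring_nf
    have hmul := (hω.add (hcard.mul_const μU))
    rw [zero_add] at hmul
    have : (1/2 : ℝ) * μU = μU / 2 := by ring
    rw [this] at hmul
    refine hmul.congr fun m => ?_
    have expand : ∑ p ∈ pairsU (m^2), h (X p.1 ω) (X p.2 ω)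
        = (∑ p ∈ pairsU (m^2), (h (X p.1 ω) (X p.2 ω) - μU))
          + ((pairsU (m^2)).card : ℝ) * μU := by
      rw [Finset.sum_sub_distrib, Finset.sum_const, nsmul_eq_mul]
      ring
    rw [expand, add_div]
    congr 1
    ring


end Core

lemma div_div_cancel_aux (a b c : ℝ) (hc : c ≠ 0) : (a/c)/(b/c) = a/b := by
  rw [div_div_div_comm, div_self hc, div_one]

/-- SLLN for the local clustering coefficient, conditional version.
Fix `x` with `E_D(x) > 0`.  Then almost surely `T_n(x) / V_n(x)` converges to
`E_T(x) / E_D(x)^2`. -/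
theorem stmt3
    {Ω : Type*} [MeasurableSpace Ω] (P : Measure Ω) [IsProbabilityMeasure P]
    (X : ℕ → Ω → ℝ) (hXmeas : ∀ i, Measurable (X i))
    (hindep : iIndepFun X P)
    (hident : ∀ i j, IdentDistrib (X i) (X j) P P)
    (B : Set ℝ) (hB : MeasurableSet B)
    (fc : ℝ → ℝ → ℝ)
    (hfcmeas : Measurable fun p : ℝ × ℝ => fc p.1 p.2)
    (hfcsym : ∀ a b, fc a b = fc b a)
    (x : ℝ)
    -- degree functional `E_D(x)` and triangle functional `E_T(x)`
    (ED ET : ℝ)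
    (hED : ED = ∫ ω, (if fc x (X 0 ω) ∈ B then (1 : ℝ) else 0) ∂P)
    (hET : ET = ∫ ω, (if fc x (X 0 ω) ∈ B then (1 : ℝ) else 0) *
        (if fc (X 0 ω) (X 1 ω) ∈ B then (1 : ℝ) else 0) *
        (if fc (X 1 ω) x ∈ B then (1 : ℝ) else 0) ∂P)
    (hEDpos : 0 < ED) :
    ∀ᵐ ω ∂P, Tendsto (fun n : ℕ =>
        (∑ j ∈ Finset.range n, ∑ k ∈ Finset.Ioo j n,
          (if fc x (X j ω) ∈ B then (1 : ℝ) else 0) *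
            (if fc (X j ω) (X k ω) ∈ B then (1 : ℝ) else 0) *
            (if fc (X k ω) x ∈ B then (1 : ℝ) else 0)) /
        (∑ j ∈ Finset.range n, ∑ k ∈ Finset.Ioo j n,
          (if fc x (X j ω) ∈ B then (1 : ℝ) else 0) *
            (if fc x (X k ω) ∈ B then (1 : ℝ) else 0)))
      atTop (nhds (ET / ED ^ 2)) := by
  -- the two kernels
  set hT : ℝ → ℝ → ℝ := fun u v => (if fc x u ∈ B then (1:ℝ) else 0) *
    (if fc u v ∈ B then (1:ℝ) else 0) * (if fc v x ∈ B then (1:ℝ) else 0) with hhT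
  set hV : ℝ → ℝ → ℝ := fun u v => (if fc x u ∈ B then (1:ℝ) else 0) *
    (if fc x v ∈ B then (1:ℝ) else 0) with hhV
  -- measurability of elementary pieces
  have m1 : Measurable fun u : ℝ => fc x u :=
    hfcmeas.comp (measurable_const.prodMk measurable_id)
  have m1' : Measurable fun u : ℝ => fc u x :=
    hfcmeas.comp (measurable_id.prodMk measurable_const)
  have gmeas : Measurable fun u : ℝ => (if fc x u ∈ B then (1:ℝ) else 0) :=
    Measurable.ite (m1 hB) measurable_const measurable_const
  have hTmeas : Measurable fun p : ℝ × ℝ => hT p.1 p.2 := by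
    apply Measurable.mul
    apply Measurable.mul
    · exact Measurable.ite ((m1.comp measurable_fst) hB) measurable_const measurable_const
    · exact Measurable.ite (hfcmeas hB) measurable_const measurable_const
    · exact Measurable.ite ((m1'.comp measurable_snd) hB) measurable_const measurable_const
  have hVmeas : Measurable fun p : ℝ × ℝ => hV p.1 p.2 := by
    apply Measurable.mul
    · exact Measurable.ite ((m1.comp measurable_fst) hB) measurable_const measurable_const
    · exact Measurable.ite ((m1.comp measurable_snd) hB) measurable_const measurable_const
  have hT0 : ∀ u v, 0 ≤ hT u v := by intro u v; simp only [hhT]; split_ifs <;> norm_num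
  have hT1 : ∀ u v, hT u v ≤ 1 := by intro u v; simp only [hhT]; split_ifs <;> norm_num
  have hV0 : ∀ u v, 0 ≤ hV u v := by intro u v; simp only [hhV]; split_ifs <;> norm_num
  have hV1 : ∀ u v, hV u v ≤ 1 := by intro u v; simp only [hhV]; split_ifs <;> norm_num
  -- expectations
  have hμT : (∫ ω, hT (X 0 ω) (X 1 ω) ∂P) = ET := hET.symm
  have hμV : (∫ ω, hV (X 0 ω) (X 1 ω) ∂P) = ED ^ 2 := by
    have indep01 : IndepFun (X 0) (X 1) P := hindep.indepFun (by norm_num)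
    have hgind : IndepFun (fun ω => (if fc x (X 0 ω) ∈ B then (1:ℝ) else 0))
        (fun ω => (if fc x (X 1 ω) ∈ B then (1:ℝ) else 0)) P :=
      indep01.comp gmeas gmeas
    have hint0 : Integrable (fun ω => (if fc x (X 0 ω) ∈ B then (1:ℝ) else 0)) P := by
      refine (integrable_const (1:ℝ)).mono'
        ((gmeas.comp (hXmeas 0)).aestronglyMeasurable) ?_
      refine Filter.Eventually.of_forall fun ω => ?_
      rw [Real.norm_eq_abs]; split_ifs <;> norm_num
    have hint1 : Integrable (fun ω => (if fc x (X 1 ω) ∈ B then (1:ℝ) else 0)) P := by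
      refine (integrable_const (1:ℝ)).mono'
        ((gmeas.comp (hXmeas 1)).aestronglyMeasurable) ?_
      refine Filter.Eventually.of_forall fun ω => ?_
      rw [Real.norm_eq_abs]; split_ifs <;> norm_num
    have hm := hgind.integral_mul_eq_mul_integral hint0.aestronglyMeasurable hint1.aestronglyMeasurable
    have he1 : ∫ ω, (if fc x (X 1 ω) ∈ B then (1:ℝ) else 0) ∂P
        = ∫ ω, (if fc x (X 0 ω) ∈ B then (1:ℝ) else 0) ∂P :=
      ((hident 1 0).comp gmeas).integral_eq
    calc ∫ ω, hV (X 0 ω) (X 1 ω) ∂P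
        = ∫ ω, ((fun ω => (if fc x (X 0 ω) ∈ B then (1:ℝ) else 0)) *
            fun ω => (if fc x (X 1 ω) ∈ B then (1:ℝ) else 0)) ω ∂P := rfl
      _ = (∫ ω, (if fc x (X 0 ω) ∈ B then (1:ℝ) else 0) ∂P) *
            ∫ ω, (if fc x (X 1 ω) ∈ B then (1:ℝ) else 0) ∂P := hm
      _ = ED ^ 2 := by rw [he1, ← hED]; ring
  -- the two SLLNs
  have hTlim := pair_slln hXmeas hindep hident hTmeas hT0 hT1
  have hVlim := pair_slln hXmeas hindep hident hVmeas hV0 hV1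
  rw [hμT] at hTlim
  rw [hμV] at hVlim
  filter_upwards [hTlim, hVlim] with ω hTω hVω
  -- rewrite double sums as sums over pairs
  have eT : ∀ n : ℕ, (∑ j ∈ Finset.range n, ∑ k ∈ Finset.Ioo j n,
      (if fc x (X j ω) ∈ B then (1 : ℝ) else 0) *
        (if fc (X j ω) (X k ω) ∈ B then (1 : ℝ) else 0) *
        (if fc (X k ω) x ∈ B then (1 : ℝ) else 0))
      = ∑ p ∈ pairsU n, hT (X p.1 ω) (X p.2 ω) := fun n =>
    sum_pairsU n fun j k => hT (X j ω) (X k ω)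
  have eV : ∀ n : ℕ, (∑ j ∈ Finset.range n, ∑ k ∈ Finset.Ioo j n,
      (if fc x (X j ω) ∈ B then (1 : ℝ) else 0) *
        (if fc x (X k ω) ∈ B then (1 : ℝ) else 0))
      = ∑ p ∈ pairsU n, hV (X p.1 ω) (X p.2 ω) := fun n =>
    sum_pairsU n fun j k => hV (X j ω) (X k ω)
  have hden_ne : (ED ^ 2 / 2 : ℝ) ≠ 0 := by positivity
  have hdiv := hTω.div hVω hden_ne
  have hlim_eq : (ET / 2) / (ED ^ 2 / 2) = ET / ED ^ 2 :=
    div_div_cancel_aux _ _ _ (by norm_num)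
  rw [hlim_eq] at hdiv
  -- eventually the denominator is positive
  have hVev : ∀ᶠ n : ℕ in atTop,
      (∑ p ∈ pairsU n, hV (X p.1 ω) (X p.2 ω)) / (n:ℝ)^2 > ED^2/4 := by
    have : (ED^2/4 : ℝ) < ED^2/2 := by nlinarith
    exact hVω.eventually (eventually_gt_nhds this)
  refine hdiv.congr' ?_
  filter_upwards [eventually_ge_atTop 1, hVev] with n hn hVn
  rw [eT, eV]
  have hn2 : ((n:ℝ))^2 ≠ 0 := by
    have : (0:ℝ) < n := by exact_mod_cast hn
    positivity
  exact div_div_cancel_aux _ _ _ hn2
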